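/- (Hessian bound for the smooth maximum.) For every integer m ≥ 1, every real β > 0, and all y, x ∈ ℝ^m, the second derivative of smax_β satisfies 0 ≤ (∇² smax_β(y))(x, x) ≤ 2β·∑_{i=1}^m x_i², where ∇² smax_β(y) denotes the second iterated Fréchet derivative of smax_β at y, applied to the pair (x, x). -/

import Mathlib

/-- The smooth maximum `smax_β(x) = (1/β)·ln(∑ i, exp(β·x_i))`. -/
noncomputable def smax {m : ℕ} (β : ℝ) (x : Fin m → ℝ) : ℝ :=
  (1 / β) * Real.log (∑ i, Real.exp (β * x i))

set_option maxHeartbeats 1000000 in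
/-- Hessian bound for the smooth maximum:
`0 ≤ (∇² smax_β(y))(x, x) ≤ 2β·∑ i, x_i²`. -/
theorem smax_hessian_bound (m : ℕ) (hm : 1 ≤ m) (β : ℝ) (hβ : 0 < β)
    (y x : Fin m → ℝ) :
    0 ≤ iteratedFDeriv ℝ 2 (smax β) y ![x, x] ∧
    iteratedFDeriv ℝ 2 (smax β) y ![x, x] ≤ 2 * β * ∑ i, (x i) ^ 2 := by
  have hone : Nonempty (Fin m) := ⟨⟨0, hm⟩⟩
  have hβ' : β ≠ 0 := ne_of_gt hβ
  set S : (Fin m → ℝ) → ℝ := fun z => ∑ i, Real.exp (β * z i) with hSdef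
  have hSpos : ∀ z, 0 < S z := fun z =>
    Finset.sum_pos (fun i _ => Real.exp_pos _) Finset.univ_nonempty
  set T : (Fin m → ℝ) → ((Fin m → ℝ) →L[ℝ] ℝ) := fun z =>
    ∑ i, Real.exp (β * z i) • (ContinuousLinearMap.proj i : (Fin m → ℝ) →L[ℝ] ℝ)
    with hTdef
  -- derivative of each exponential
  have hexp : ∀ (z : Fin m → ℝ) (i : Fin m),
      HasFDerivAt (fun z : Fin m → ℝ => Real.exp (β * z i))
        ((β * Real.exp (β * z i)) •
          (ContinuousLinearMap.proj i : (Fin m → ℝ) →L[ℝ] ℝ)) z := by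
    intro z i
    have h0 : HasFDerivAt (fun z : Fin m → ℝ => z i)
        (ContinuousLinearMap.proj i : (Fin m → ℝ) →L[ℝ] ℝ) z :=
      (ContinuousLinearMap.proj i : (Fin m → ℝ) →L[ℝ] ℝ).hasFDerivAt
    have h2 := (h0.const_mul β).exp
    refine h2.congr_fderiv ?_
    rw [smul_smul, mul_comm]
  have hS : ∀ z, HasFDerivAt S (β • T z) z := by
    intro z
    have h := HasFDerivAt.fun_sum (fun i (_ : i ∈ Finset.univ) => hexp z i)
    refine h.congr_fderiv ?_
    symm
    rw [hTdef, Finset.smul_sum]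
    exact Finset.sum_congr rfl fun i _ => by rw [smul_smul, mul_comm]
  -- first derivative of smax
  have hsmax : ∀ z, HasFDerivAt (smax β) ((S z)⁻¹ • T z) z := by
    intro z
    have h := ((hS z).log (ne_of_gt (hSpos z))).const_mul (1 / β)
    refine h.congr_fderiv ?_
    symm
    rw [smul_smul, smul_smul]
    congr 1
    field_simp
  have hfder : fderiv ℝ (smax β) = fun z => (S z)⁻¹ • T z := by
    funext z; exact (hsmax z).fderiv
  -- derivative of T
  have hT : ∀ z, HasFDerivAt T
      (∑ i, (((β * Real.exp (β * z i)) •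
          (ContinuousLinearMap.proj i : (Fin m → ℝ) →L[ℝ] ℝ)).smulRight
          (ContinuousLinearMap.proj i))) z := by
    intro z
    exact HasFDerivAt.fun_sum (fun i _ => (hexp z i).smul_const (ContinuousLinearMap.proj i : (Fin m → ℝ) →L[ℝ] ℝ))
  -- derivative of z ↦ (S z)⁻¹
  have hSinv : ∀ z, HasFDerivAt (fun z => (S z)⁻¹)
      ((-((S z) ^ 2)⁻¹) • (β • T z)) z := by
    intro z
    exact (hasDerivAt_inv (ne_of_gt (hSpos z))).comp_hasFDerivAt z (hS z)
  -- second derivative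
  have hF : HasFDerivAt (fun z => (S z)⁻¹ • T z)
      ((S y)⁻¹ • (∑ i, (((β * Real.exp (β * y i)) •
          (ContinuousLinearMap.proj i : (Fin m → ℝ) →L[ℝ] ℝ)).smulRight
          (ContinuousLinearMap.proj i))) +
        (((-((S y) ^ 2)⁻¹) • (β • T y)).smulRight (T y))) y :=
    (hSinv y).smul (hT y)
  set a : Fin m → ℝ := fun i => Real.exp (β * y i) with ha
  set A : ℝ := S y with hA
  set P : ℝ := ∑ i, a i * x i with hP
  set Q : ℝ := ∑ i, a i * x i ^ 2 with hQ
  have hApos : 0 < A := hSpos y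
  have hTyx : T y x = P := by
    rw [hTdef, hP]
    simp only [ContinuousLinearMap.sum_apply, ContinuousLinearMap.smul_apply,
      ContinuousLinearMap.proj_apply, smul_eq_mul]
    rfl
  have hiter : iteratedFDeriv ℝ 2 (smax β) y ![x, x]
      = A⁻¹ * (∑ i, β * a i * x i * x i) + (-(A ^ 2)⁻¹ * (β * P)) * P := by
    rw [iteratedFDeriv_two_apply, hfder, hF.fderiv]
    simp only [Matrix.cons_val_zero, Matrix.cons_val_one, Matrix.head_cons,
      ContinuousLinearMap.add_apply, ContinuousLinearMap.smul_apply,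
      ContinuousLinearMap.sum_apply, ContinuousLinearMap.smulRight_apply,
      ContinuousLinearMap.proj_apply, smul_eq_mul, Finset.mul_sum, hTyx]
    rfl
  have hsumQ : (∑ i, β * a i * x i * x i) = β * Q := by
    rw [hQ, Finset.mul_sum]
    exact Finset.sum_congr rfl fun i _ => by ring
  have hval : iteratedFDeriv ℝ 2 (smax β) y ![x, x]
      = β * (Q * A - P ^ 2) / A ^ 2 := by
    rw [hiter, hsumQ]
    field_simp
    ring
  -- Cauchy–Schwarz : P^2 ≤ A * Q
  have hann : ∀ i, 0 < a i := fun i => Real.exp_pos _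
  have hCS : P ^ 2 ≤ A * Q := by
    have h := Finset.sum_mul_sq_le_sq_mul_sq Finset.univ
      (fun i => Real.sqrt (a i)) (fun i => Real.sqrt (a i) * x i)
    have e1 : ∀ i : Fin m, Real.sqrt (a i) * (Real.sqrt (a i) * x i) = a i * x i := by
      intro i
      rw [← mul_assoc, Real.mul_self_sqrt (le_of_lt (hann i))]
    have e2 : ∀ i : Fin m, Real.sqrt (a i) ^ 2 = a i := fun i =>
      Real.sq_sqrt (le_of_lt (hann i))
    have e3 : ∀ i : Fin m, (Real.sqrt (a i) * x i) ^ 2 = a i * x i ^ 2 := by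
      intro i; rw [mul_pow, e2]
    calc P ^ 2 = (∑ i, Real.sqrt (a i) * (Real.sqrt (a i) * x i)) ^ 2 := by
          rw [hP]; congr 1; exact Finset.sum_congr rfl fun i _ => (e1 i).symm
      _ ≤ (∑ i, Real.sqrt (a i) ^ 2) * ∑ i, (Real.sqrt (a i) * x i) ^ 2 := h
      _ = A * Q := by
          rw [hA, hQ, hSdef]
          congr 1
          · exact Finset.sum_congr rfl fun i _ => e2 i
          · exact Finset.sum_congr rfl fun i _ => e3 i
  have hQA : Q ≤ A * ∑ i, x i ^ 2 := by
    rw [hQ, Finset.mul_sum]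
    apply Finset.sum_le_sum
    intro i _
    have hle : a i ≤ A := by
      rw [hA]
      exact Finset.single_le_sum (fun j _ => le_of_lt (hann j)) (Finset.mem_univ i)
    exact mul_le_mul_of_nonneg_right hle (sq_nonneg _)
  constructor
  · rw [hval]
    apply div_nonneg _ (sq_nonneg _)
    nlinarith
  · rw [hval]
    have hsum : 0 ≤ ∑ i, x i ^ 2 := Finset.sum_nonneg fun i _ => sq_nonneg _
    rw [div_le_iff₀ (by positivity)]
    nlinarith [mul_le_mul_of_nonneg_right hQA hApos.le, mul_nonneg hβ.le (sq_nonneg P),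
      mul_nonneg (mul_nonneg hβ.le (sq_nonneg A)) hsum, hβ.le]
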